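/- A discrete m-function has at most one sequence of continued fraction coefficients: if m has continued fraction coefficients {(a_n,b_n)}_{n≥1} with stripping sequence (m_n)_{n≥0} and also coefficients {(a'_n,b'_n)}_{n≥1} with stripping sequence (m'_n)_{n≥0}, then a_n = a'_n and b_n = b'_n for all n ≥ 1, and m_n = m'_n on ℂ₊ for all n ≥ 0. -/

import Mathlib

open MeasureTheory Polynomial Filter

noncomputable section

/-- A discrete m-function: the Cauchy transform of a compactly supported
probability measure on `ℝ`, viewed as a function on the upper half plane
`ℂ₊ = {z : 0 < z.im}`. -/
def IsDiscreteMFunction (m : ℂ → ℂ) : Prop :=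
  ∃ ρ : Measure ℝ, IsProbabilityMeasure ρ ∧ (∃ t : ℝ, ρ (Set.Icc (-t) t) = 1) ∧
    ∀ z : ℂ, 0 < z.im → m z = ∫ x : ℝ, ((x : ℂ) - z)⁻¹ ∂ρ

/-- `m` has continued fraction (Jacobi) coefficients `{(a n, b n)}_{n ≥ 1}`
(sequences indexed from 1; index 0 unused) with stripping sequence `ms`. -/
def HasJacobiCoeffs (m : ℂ → ℂ) (a b : ℕ → ℝ) (ms : ℕ → ℂ → ℂ) : Prop :=
  ms 0 = m ∧ (∀ n, IsDiscreteMFunction (ms n)) ∧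
    ∀ n, ∀ z : ℂ, 0 < z.im →
      ms n z = ((b (n + 1) : ℂ) - z - (a (n + 1) : ℂ) ^ 2 * ms (n + 1) z)⁻¹

/-- Shifted first-kind polynomials: `pShift a b (j+1) = p_j(·; {a_i, b_i}_{i=1}^j)`,
so `pShift a b 0 = p₋₁ = 0`, `pShift a b 1 = p₀ = 1`, and the recurrence
`z p_j = a_{j+1} p_{j+1} + b_{j+1} p_j + a_j p_{j-1}` holds. -/
def pShift (a b : ℕ → ℝ) : ℕ → ℂ → ℂ
  | 0 => fun _ => 0
  | 1 => fun _ => 1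
  | (n + 2) => fun z =>
      ((z - (b (n + 1) : ℂ)) * pShift a b (n + 1) z - (a n : ℂ) * pShift a b n z) /
        (a (n + 1) : ℂ)

/-- The first-kind polynomial `p_n(z; {a_j, b_j}_{j=1}^n)`. -/
def firstKind (a b : ℕ → ℝ) (n : ℕ) : ℂ → ℂ := pShift a b (n + 1)

/-- The second-kind polynomial `q_n(z; {a_j, b_j}_{j=1}^n) = a₁⁻¹ p_{n-1}(z; {a_j, b_j}_{j=2}^n)`,
with `q₀ = 0`. -/
def secondKind (a b : ℕ → ℝ) (n : ℕ) : ℂ → ℂ :=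
  fun z => ((a 1 : ℂ))⁻¹ * pShift (fun j => a (j + 1)) (fun j => b (j + 1)) n z

/-- The conjugated transfer matrix `T_n = [[p_n, q_n], [-a_n p_{n-1}, -a_n q_{n-1}]]`
of the parameters `(a_j, b_j)_{j=1}^n`. -/
def ctm (a b : ℕ → ℝ) (n : ℕ) : Matrix (Fin 2) (Fin 2) (ℂ → ℂ) :=
  !![firstKind a b n, secondKind a b n;
     (fun z => -(a n : ℂ) * firstKind a b (n - 1) z),
     (fun z => -(a n : ℂ) * secondKind a b (n - 1) z)]

/-- The finite string `(s (start+1), …, s (start+len))` is a palindrome. -/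
def PalSeg {α : Type*} (s : ℕ → α) (start len : ℕ) : Prop :=
  ∀ i, 1 ≤ i → i ≤ len → s (start + i) = s (start + (len + 1 - i))

/-- The pair of `p`-periodic sequences `(a, b)` is doubly palindromic with period `p`
and first length `ℓ` (`1 ≤ ℓ ≤ p - 2`): `(a₁,…,a_ℓ)` and `(a_{ℓ+1},…,a_p)` are palindromes,
and `(b₁,…,b_{ℓ+1})` and `(b_{ℓ+2},…,b_p)` are palindromes. -/
def DoublyPalindromic (a b : ℕ → ℝ) (p ℓ : ℕ) : Prop :=
  1 ≤ ℓ ∧ ℓ + 2 ≤ p ∧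
    PalSeg a 0 ℓ ∧ PalSeg a ℓ (p - ℓ) ∧
    PalSeg b 0 (ℓ + 1) ∧ PalSeg b (ℓ + 1) (p - (ℓ + 1))

lemma tendsto_inv_yI : Tendsto (fun y : ℝ => ((y : ℂ) * Complex.I)⁻¹) atTop (nhds 0) := by
  have h : ∀ y : ℝ, ((y : ℂ) * Complex.I)⁻¹ = ((y⁻¹ : ℝ) : ℂ) * Complex.I⁻¹ := by
    intro y; rw [mul_inv, Complex.ofReal_inv]
  simp only [h]
  have h0 : Tendsto (fun y : ℝ => ((y⁻¹ : ℝ) : ℂ)) atTop (nhds ((0 : ℝ) : ℂ)) :=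
    (Complex.continuous_ofReal.tendsto 0).comp tendsto_inv_atTop_zero
  have h1 := h0.mul (tendsto_const_nhds (x := (Complex.I)⁻¹))
  simpa using h1

lemma sub_yI_ne_zero (x y : ℝ) (hy : y ≠ 0) : ((x : ℂ) - (y : ℂ) * Complex.I) ≠ 0 := by
  intro h
  have := congrArg Complex.im h
  simp at this
  exact hy this

lemma abs_le_sub_yI (x y : ℝ) : |y| ≤ ‖(x : ℂ) - (y : ℂ) * Complex.I‖ := by
  have := Complex.abs_im_le_norm ((x : ℂ) - (y : ℂ) * Complex.I)
  simpa using this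

lemma pointwise_lim (x : ℝ) :
    Tendsto (fun y : ℝ => ((y : ℂ) * Complex.I) * ((x : ℂ) - (y : ℂ) * Complex.I)⁻¹)
      atTop (nhds (-1)) := by
  have heq : ∀ᶠ y : ℝ in atTop,
      ((x : ℂ) * ((y : ℂ) * Complex.I)⁻¹ - 1)⁻¹
        = ((y : ℂ) * Complex.I) * ((x : ℂ) - (y : ℂ) * Complex.I)⁻¹ := by
    filter_upwards [eventually_gt_atTop 0] with y hy
    have h1 : ((y : ℂ) * Complex.I) ≠ 0 := by
      simp [Complex.ofReal_ne_zero, hy.ne']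
    have h2 := sub_yI_ne_zero x y hy.ne'
    rw [show (x : ℂ) * ((y : ℂ) * Complex.I)⁻¹ - 1 = ((x : ℂ) - (y : ℂ) * Complex.I) / ((y : ℂ) * Complex.I) by
      rw [sub_div, div_self h1, div_eq_mul_inv], inv_div, div_eq_mul_inv]
  have hlim : Tendsto (fun y : ℝ => ((x : ℂ) * ((y : ℂ) * Complex.I)⁻¹ - 1)⁻¹)
      atTop (nhds (-1)) := by
    have h3 : Tendsto (fun y : ℝ => (x : ℂ) * ((y : ℂ) * Complex.I)⁻¹ - 1) atTop
        (nhds (-1)) := by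
      have := (tendsto_const_nhds (x := (x : ℂ))).mul tendsto_inv_yI
      simpa using this.sub (tendsto_const_nhds (x := (1 : ℂ)))
    have h4 := h3.inv₀ (by norm_num : (-1 : ℂ) ≠ 0)
    norm_num at h4
    convert h4 using 2 <;> norm_num
  exact hlim.congr' heq

lemma dmf_mul_tendsto (M : ℂ → ℂ) (hM : IsDiscreteMFunction M) :
    Tendsto (fun y : ℝ => ((y : ℂ) * Complex.I) * M ((y : ℂ) * Complex.I)) atTop
      (nhds (-1)) := by
  obtain ⟨ρ, hprob, -, hrep⟩ := hM
  have hmain : Tendsto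
      (fun y : ℝ => ∫ x : ℝ, ((y : ℂ) * Complex.I) * (((x : ℝ) : ℂ) - (y : ℂ) * Complex.I)⁻¹ ∂ρ)
      atTop (nhds (∫ _ : ℝ, (-1 : ℂ) ∂ρ)) := by
    apply tendsto_integral_filter_of_dominated_convergence (fun _ => (1 : ℝ))
    · filter_upwards [eventually_gt_atTop (0 : ℝ)] with y hy
      refine Continuous.aestronglyMeasurable ?_
      exact continuous_const.mul ((Complex.continuous_ofReal.sub continuous_const).inv₀
        (fun x => sub_yI_ne_zero x y hy.ne'))
    · filter_upwards [eventually_gt_atTop (0 : ℝ)] with y hy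
      refine Eventually.of_forall fun x => ?_
      have h1 : (0 : ℝ) < |y| := by positivity
      have h2 := abs_le_sub_yI x y
      rw [norm_mul, norm_inv]
      have h3 : ‖(y : ℂ) * Complex.I‖ = |y| := by
        simp
      rw [h3, ← div_eq_mul_inv, div_le_one (lt_of_lt_of_le h1 h2)]
      exact h2
    · exact integrable_const 1
    · exact Eventually.of_forall fun x => pointwise_lim x
  have hconst : (∫ _ : ℝ, (-1 : ℂ) ∂ρ) = -1 := by
    simp [integral_const, hprob.measure_univ]
  rw [hconst] at hmain
  apply hmain.congr'
  filter_upwards [eventually_gt_atTop (0 : ℝ)] with y hy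
  have him : ((y : ℂ) * Complex.I).im = y := by simp
  rw [hrep _ (by rw [him]; exact hy)]
  simpa [smul_eq_mul] using
    (integral_smul (μ := ρ) ((y : ℂ) * Complex.I) (fun x : ℝ => ((x : ℂ) - (y : ℂ) * Complex.I)⁻¹))

lemma dmf_tendsto_zero (M : ℂ → ℂ) (hM : IsDiscreteMFunction M) :
    Tendsto (fun y : ℝ => M ((y : ℂ) * Complex.I)) atTop (nhds 0) := by
  have h := tendsto_inv_yI.mul (dmf_mul_tendsto M hM)
  rw [zero_mul] at h
  apply h.congr'
  filter_upwards [eventually_gt_atTop (0 : ℝ)] with y hy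
  have h1 : ((y : ℂ) * Complex.I) ≠ 0 := by simp [Complex.ofReal_ne_zero, hy.ne']
  rw [← mul_assoc, inv_mul_cancel₀ h1, one_mul]

lemma step_key (M M' : ℂ → ℂ) (hM : IsDiscreteMFunction M) (hM' : IsDiscreteMFunction M')
    (A B A' B' : ℝ) (hA : 0 < A) (hA' : 0 < A')
    (heq : ∀ z : ℂ, 0 < z.im →
      (B : ℂ) - z - (A : ℂ) ^ 2 * M z = (B' : ℂ) - z - (A' : ℂ) ^ 2 * M' z) :
    A = A' ∧ B = B' ∧ ∀ z : ℂ, 0 < z.im → M z = M' z := by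
  have him : ∀ y : ℝ, 0 < y → (0 : ℝ) < ((y : ℂ) * Complex.I).im := by
    intro y hy; simpa using hy
  have heq2 : ∀ z : ℂ, 0 < z.im →
      (B : ℂ) - (A : ℂ) ^ 2 * M z = (B' : ℂ) - (A' : ℂ) ^ 2 * M' z := by
    intro z hz
    linear_combination heq z hz
  have hBlim : Tendsto (fun y : ℝ => (B : ℂ) - (A : ℂ) ^ 2 * M ((y : ℂ) * Complex.I))
      atTop (nhds (B : ℂ)) := by
    have := (tendsto_const_nhds (x := ((A : ℂ) ^ 2))).mul (dmf_tendsto_zero M hM)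
    simpa using (tendsto_const_nhds (x := (B : ℂ))).sub this
  have hBlim' : Tendsto (fun y : ℝ => (B : ℂ) - (A : ℂ) ^ 2 * M ((y : ℂ) * Complex.I))
      atTop (nhds (B' : ℂ)) := by
    have base : Tendsto (fun y : ℝ => (B' : ℂ) - (A' : ℂ) ^ 2 * M' ((y : ℂ) * Complex.I))
        atTop (nhds (B' : ℂ)) := by
      have := (tendsto_const_nhds (x := ((A' : ℂ) ^ 2))).mul (dmf_tendsto_zero M' hM')
      simpa using (tendsto_const_nhds (x := (B' : ℂ))).sub this
    apply base.congr'
    filter_upwards [eventually_gt_atTop (0 : ℝ)] with y hy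
    exact (heq2 _ (him y hy)).symm
  have hBC : (B : ℂ) = (B' : ℂ) := tendsto_nhds_unique hBlim hBlim'
  have hB : B = B' := by exact_mod_cast hBC
  have heq3 : ∀ z : ℂ, 0 < z.im → (A : ℂ) ^ 2 * M z = (A' : ℂ) ^ 2 * M' z := by
    intro z hz
    have := heq2 z hz
    rw [hBC] at this
    linear_combination -this
  have hAlim : Tendsto
      (fun y : ℝ => (A : ℂ) ^ 2 * (((y : ℂ) * Complex.I) * M ((y : ℂ) * Complex.I)))
      atTop (nhds ((A : ℂ) ^ 2 * (-1))) :=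
    (tendsto_const_nhds (x := ((A : ℂ) ^ 2))).mul (dmf_mul_tendsto M hM)
  have hAlim' : Tendsto
      (fun y : ℝ => (A : ℂ) ^ 2 * (((y : ℂ) * Complex.I) * M ((y : ℂ) * Complex.I)))
      atTop (nhds ((A' : ℂ) ^ 2 * (-1))) := by
    have base : Tendsto
        (fun y : ℝ => (A' : ℂ) ^ 2 * (((y : ℂ) * Complex.I) * M' ((y : ℂ) * Complex.I)))
        atTop (nhds ((A' : ℂ) ^ 2 * (-1))) :=
      (tendsto_const_nhds (x := ((A' : ℂ) ^ 2))).mul (dmf_mul_tendsto M' hM')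
    apply base.congr'
    filter_upwards [eventually_gt_atTop (0 : ℝ)] with y hy
    have := heq3 _ (him y hy)
    linear_combination -((y : ℂ) * Complex.I) * this
  have hAC : (A : ℂ) ^ 2 = (A' : ℂ) ^ 2 := by
    have := tendsto_nhds_unique hAlim hAlim'
    field_simp at this
    have h' : -(A : ℂ) ^ 2 = -(A' : ℂ) ^ 2 := by exact_mod_cast this
    exact neg_inj.mp h'
  have hA2 : A ^ 2 = A' ^ 2 := by exact_mod_cast hAC
  have hAeq : A = A' := by
    nlinarith [sq_nonneg (A - A'), sq_nonneg (A + A')]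
  refine ⟨hAeq, hB, fun z hz => ?_⟩
  have h := heq3 z hz
  rw [hAC] at h
  have hA'0 : ((A' : ℂ)) ^ 2 ≠ 0 := by
    simp [Complex.ofReal_ne_zero, hA'.ne']
  exact mul_left_cancel₀ hA'0 h


/-- A discrete m-function has at most one sequence of continued fraction coefficients,
and the corresponding stripping sequences agree on `ℂ₊`. -/
theorem coeffs_unique
    (m : ℂ → ℂ) (a b a' b' : ℕ → ℝ) (ms ms' : ℕ → ℂ → ℂ)
    (hpos : ∀ n, 1 ≤ n → 0 < a n) (hpos' : ∀ n, 1 ≤ n → 0 < a' n)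
    (h1 : HasJacobiCoeffs m a b ms) (h2 : HasJacobiCoeffs m a' b' ms') :
    (∀ n, 1 ≤ n → a n = a' n ∧ b n = b' n) ∧
      ∀ n, ∀ z : ℂ, 0 < z.im → ms n z = ms' n z := by
  obtain ⟨hms0, hmsd, hrec⟩ := h1
  obtain ⟨hms0', hmsd', hrec'⟩ := h2
  have key : ∀ n, (∀ z : ℂ, 0 < z.im → ms n z = ms' n z) →
      a (n + 1) = a' (n + 1) ∧ b (n + 1) = b' (n + 1) ∧
        ∀ z : ℂ, 0 < z.im → ms (n + 1) z = ms' (n + 1) z := by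
    intro n hn
    have heq : ∀ z : ℂ, 0 < z.im →
        (b (n + 1) : ℂ) - z - (a (n + 1) : ℂ) ^ 2 * ms (n + 1) z
          = (b' (n + 1) : ℂ) - z - (a' (n + 1) : ℂ) ^ 2 * ms' (n + 1) z := by
      intro z hz
      apply inv_injective
      rw [← hrec n z hz, ← hrec' n z hz, hn z hz]
    exact step_key _ _ (hmsd (n + 1)) (hmsd' (n + 1)) _ _ _ _
      (hpos _ (Nat.le_add_left 1 n)) (hpos' _ (Nat.le_add_left 1 n)) heq
  have all : ∀ n, ∀ z : ℂ, 0 < z.im → ms n z = ms' n z := by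
    intro n
    induction n with
    | zero => intro z hz; rw [hms0, hms0']
    | succ k ih => exact (key k ih).2.2
  refine ⟨?_, all⟩
  intro n hn
  obtain ⟨k, rfl⟩ := Nat.exists_eq_add_of_lt (Nat.lt_of_lt_of_le Nat.zero_lt_one hn)
  simp only [zero_add]
  exact ⟨(key k (all k)).1, (key k (all k)).2.1⟩
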